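/- If φ is an automorphism of the unit disk, then the composition operator C_φ on the Dirichlet space is essentially normal, i.e. the self-commutator [C_φ*, C_φ] = C_φ* C_φ - C_φ C_φ* is compact. -/

import Mathlib

open Complex MeasureTheory Metric Filter Set

noncomputable section

/-- The open unit disk in `ℂ`. -/
def unitD : Set ℂ := Metric.ball 0 1

/-- The reproducing kernel of the Dirichlet space. -/
def Kker (w z : ℂ) : ℂ := 1 + Complex.log (1 / (1 - (starRingEnd ℂ) w * z))

/-- The Dirichlet inner product. -/
def dInner (f g : ℂ → ℂ) : ℂ :=
  f 0 * (starRingEnd ℂ) (g 0) +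
    (Real.pi : ℂ)⁻¹ * ∫ z in unitD, deriv f z * (starRingEnd ℂ) (deriv g z)

/-- The square of the Dirichlet norm. -/
def dNormSq (f : ℂ → ℂ) : ℝ :=
  ‖f 0‖ ^ 2 + (Real.pi)⁻¹ * ∫ z in unitD, ‖deriv f z‖ ^ 2

/-- The Dirichlet norm. -/
def dNorm (f : ℂ → ℂ) : ℝ := Real.sqrt (dNormSq f)

/-- Membership in the Dirichlet space. -/
def MemDirichlet (f : ℂ → ℂ) : Prop :=
  DifferentiableOn ℂ f unitD ∧ IntegrableOn (fun z => ‖deriv f z‖ ^ 2) unitD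

/-- An operator on the Dirichlet space is compact iff it maps bounded weakly
null sequences to norm null sequences. -/
def CompactOnD (T : (ℂ → ℂ) → (ℂ → ℂ)) : Prop :=
  ∀ f : ℕ → ℂ → ℂ, (∀ n, MemDirichlet (f n)) → (∀ n, dNorm (f n) ≤ 1) →
    (∀ g, MemDirichlet g → Tendsto (fun n => dInner (f n) g) atTop (nhds 0)) →
    Tendsto (fun n => dNorm (T (f n))) atTop (nhds 0)

/-- Boundedness of an operator on the Dirichlet space. -/
def BoundedOnD (T : (ℂ → ℂ) → (ℂ → ℂ)) : Prop :=
  (∀ f, MemDirichlet f → MemDirichlet (T f)) ∧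
    ∃ C : ℝ, ∀ f, MemDirichlet f → dNorm (T f) ≤ C * dNorm f


/-! ### Auxiliary lemmas -/

section Aux

open scoped ENNReal NNReal

lemma unitD_isOpen : IsOpen unitD := isOpen_ball
lemma unitD_meas : MeasurableSet unitD := measurableSet_ball
lemma mem_unitD {z : ℂ} : z ∈ unitD ↔ ‖z‖ < 1 := mem_ball_zero_iff
lemma zero_mem_unitD : (0 : ℂ) ∈ unitD := by simp [unitD]

lemma norm_conj_mul_lt_one {u z : ℂ} (hu : ‖u‖ < 1) (hz : ‖z‖ < 1) :
    ‖(starRingEnd ℂ) u * z‖ < 1 := by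
  rw [norm_mul, RCLike.norm_conj]
  nlinarith [norm_nonneg u, norm_nonneg z]

lemma one_sub_ne_zero' {v : ℂ} (hv : ‖v‖ < 1) : (1 : ℂ) - v ≠ 0 := by
  intro h; rw [sub_eq_zero] at h; rw [← h] at hv; simp at hv

lemma re_pos_of_norm_lt_one {u : ℂ} (h : ‖u‖ < 1) : 0 < (1 - u).re := by
  have h2 := Complex.abs_re_le_norm u
  simp only [Complex.sub_re, Complex.one_re]
  have : u.re ≤ ‖u‖ := (abs_le.1 h2).2
  linarith

lemma ne_zero_of_re_pos {u : ℂ} (h : 0 < u.re) : u ≠ 0 := by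
  intro h0; rw [h0] at h; simp at h

lemma arg_ne_pi_of_re_pos {u : ℂ} (h : 0 < u.re) : u.arg ≠ Real.pi := by
  intro hp
  rcases Complex.arg_eq_pi_iff.1 hp with ⟨h1, _⟩
  linarith

lemma log_mul_of_re_pos {x y : ℂ} (hx : 0 < x.re) (hy : 0 < y.re) :
    Complex.log (x * y) = Complex.log x + Complex.log y := by
  apply Complex.log_mul (_root_.ne_zero_of_re_pos hx) (_root_.ne_zero_of_re_pos hy)
  have h1 : |x.arg| < Real.pi / 2 := Complex.abs_arg_lt_pi_div_two_iff.2 (Or.inl hx)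
  have h2 : |y.arg| < Real.pi / 2 := Complex.abs_arg_lt_pi_div_two_iff.2 (Or.inl hy)
  have i1 := abs_lt.1 h1
  have i2 := abs_lt.1 h2
  constructor <;> [linarith [i1.1, i2.1]; linarith [i1.2, i2.2]]

lemma Kker_eq {u v : ℂ} (h : ‖(starRingEnd ℂ) u * v‖ < 1) :
    Kker u v = 1 - Complex.log (1 - (starRingEnd ℂ) u * v) := by
  rw [Kker, one_div, Complex.log_inv _
    (arg_ne_pi_of_re_pos (re_pos_of_norm_lt_one h))]
  ring

lemma Kker_zero (z : ℂ) : Kker 0 z = 1 := by simp [Kker]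

lemma conj_Kker {u v : ℂ} (h : ‖(starRingEnd ℂ) u * v‖ < 1) :
    (starRingEnd ℂ) (Kker u v) = Kker v u := by
  have h' : ‖(starRingEnd ℂ) v * u‖ < 1 := by
    rw [norm_mul, RCLike.norm_conj, mul_comm]
    rw [norm_mul, RCLike.norm_conj] at h
    exact h
  rw [Kker_eq h, Kker_eq h', map_sub, map_one,
    ← Complex.log_conj _ (arg_ne_pi_of_re_pos (re_pos_of_norm_lt_one h))]
  congr 2
  simp [mul_comm]

lemma key_norm_lt {u z : ℂ} (hu : ‖u‖ < 1) (hz : ‖z‖ < 1) :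
    ‖u - z‖ < ‖1 - (starRingEnd ℂ) u * z‖ := by
  have hnormsq : Complex.normSq (1 - (starRingEnd ℂ) u * z) - Complex.normSq (u - z)
      = (1 - Complex.normSq u) * (1 - Complex.normSq z) := by
    have e1 : ((Complex.normSq (1 - (starRingEnd ℂ) u * z) : ℂ)) - Complex.normSq (u - z)
        = (((1 - Complex.normSq u) * (1 - Complex.normSq z) : ℝ) : ℂ) := by
      push_cast [← Complex.mul_conj]
      simp only [map_sub, map_mul, map_one, Complex.conj_conj]
      ring
    exact_mod_cast e1
  have q1 : Complex.normSq u = ‖u‖ ^ 2 := by rw [Complex.sq_norm]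
  have q2 : Complex.normSq z = ‖z‖ ^ 2 := by rw [Complex.sq_norm]
  have p1 : 0 < 1 - Complex.normSq u := by nlinarith [norm_nonneg u]
  have p2 : 0 < 1 - Complex.normSq z := by nlinarith [norm_nonneg z]
  have h1 : Complex.normSq (u - z) < Complex.normSq (1 - (starRingEnd ℂ) u * z) := by
    nlinarith [mul_pos p1 p2]
  have e2 : ‖u - z‖ ^ 2 < ‖1 - (starRingEnd ℂ) u * z‖ ^ 2 := by
    rw [Complex.sq_norm, Complex.sq_norm]; exact h1
  exact lt_of_pow_lt_pow_left₀ 2 (norm_nonneg _) e2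

/-- Möbius automorphism of the disk. -/
def mobA (a e : ℂ) : ℂ → ℂ := fun z => e * ((a - z) / (1 - (starRingEnd ℂ) a * z))

lemma mul_conj_self_eq_one {e : ℂ} (he : ‖e‖ = 1) : e * (starRingEnd ℂ) e = 1 := by
  rw [Complex.mul_conj]
  norm_cast
  rw [← Complex.sq_norm, he]; norm_num

lemma e_ne_zero {e : ℂ} (he : ‖e‖ = 1) : e ≠ 0 := by
  intro h; rw [h] at he; simp at he

lemma mobA_mem {a e z : ℂ} (ha : ‖a‖ < 1) (he : ‖e‖ = 1) (hz : ‖z‖ < 1) :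
    ‖mobA a e z‖ < 1 := by
  unfold mobA
  rw [norm_mul, he, one_mul, norm_div]
  have hd : (0:ℝ) < ‖1 - (starRingEnd ℂ) a * z‖ := by
    have h := key_norm_lt ha hz
    have := norm_nonneg (a - z)
    linarith
  rw [div_lt_one hd]
  exact key_norm_lt ha hz

lemma mobA_can {a e z : ℂ} (hD : (1 : ℂ) - (starRingEnd ℂ) a * z ≠ 0) :
    mobA a e z * (1 - (starRingEnd ℂ) a * z) = e * (a - z) := by
  unfold mobA
  rw [mul_assoc, div_mul_cancel₀ _ hD]

lemma phi_psi {a e : ℂ} (ha : ‖a‖ < 1) (he : ‖e‖ = 1) {w : ℂ} (hw : ‖w‖ < 1) :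
    mobA a e (mobA (e * a) ((starRingEnd ℂ) e) w) = w := by
  have hb : ‖e * a‖ < 1 := by rw [norm_mul, he, one_mul]; exact ha
  have hce : ‖(starRingEnd ℂ) e‖ = 1 := by rw [RCLike.norm_conj]; exact he
  have ht : ‖mobA (e * a) ((starRingEnd ℂ) e) w‖ < 1 := mobA_mem hb hce hw
  set t := mobA (e * a) ((starRingEnd ℂ) e) w with htdef
  have hD : (1 : ℂ) - (starRingEnd ℂ) (e * a) * w ≠ 0 :=
    one_sub_ne_zero' (norm_conj_mul_lt_one hb hw)
  have hY : (1 : ℂ) - (starRingEnd ℂ) a * t ≠ 0 :=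
    one_sub_ne_zero' (norm_conj_mul_lt_one ha ht)
  have hcan : t * (1 - (starRingEnd ℂ) e * (starRingEnd ℂ) a * w)
      = (starRingEnd ℂ) e * (e * a - w) := by
    rw [htdef]
    have := mobA_can (a := e * a) (e := (starRingEnd ℂ) e) (z := w) hD
    rwa [map_mul] at this
  have he1 : e * (starRingEnd ℂ) e = 1 := mul_conj_self_eq_one he
  unfold mobA
  rw [mul_div_assoc', div_eq_iff hY]
  linear_combination (-e) * hcan +
    (-((starRingEnd ℂ) a * t * w) + w - e * a) * he1

lemma psi_phi {a e : ℂ} (ha : ‖a‖ < 1) (he : ‖e‖ = 1) {z : ℂ} (hz : ‖z‖ < 1) :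
    mobA (e * a) ((starRingEnd ℂ) e) (mobA a e z) = z := by
  have hb : ‖e * a‖ < 1 := by rw [norm_mul, he, one_mul]; exact ha
  have hce : ‖(starRingEnd ℂ) e‖ = 1 := by rw [RCLike.norm_conj]; exact he
  have he1 : e * (starRingEnd ℂ) e = 1 := mul_conj_self_eq_one he
  have h := phi_psi (a := e * a) (e := (starRingEnd ℂ) e) hb hce hz
  have e1 : (starRingEnd ℂ) e * (e * a) = a := by
    rw [← mul_assoc, mul_comm ((starRingEnd ℂ) e) e, he1, one_mul]
  rw [e1, Complex.conj_conj] at h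
  exact h

lemma prod_identity {a e w z : ℂ} (ha : ‖a‖ < 1) (he : ‖e‖ = 1)
    (hw : ‖w‖ < 1) (hz : ‖z‖ < 1) :
    (1 - (starRingEnd ℂ) w * mobA a e z) * (1 - (starRingEnd ℂ) a * z)
      = (1 - (starRingEnd ℂ) (mobA (e * a) ((starRingEnd ℂ) e) w) * z)
        * (1 - (starRingEnd ℂ) w * (e * a)) := by
  have hb : ‖e * a‖ < 1 := by rw [norm_mul, he, one_mul]; exact ha
  have he1 : e * (starRingEnd ℂ) e = 1 := mul_conj_self_eq_one he
  have hDz : (1 : ℂ) - (starRingEnd ℂ) a * z ≠ 0 :=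
    one_sub_ne_zero' (norm_conj_mul_lt_one ha hz)
  have hDw : (1 : ℂ) - (starRingEnd ℂ) (e * a) * w ≠ 0 :=
    one_sub_ne_zero' (norm_conj_mul_lt_one hb hw)
  have hcs : mobA a e z * (1 - (starRingEnd ℂ) a * z) = e * (a - z) := mobA_can hDz
  have hcp : mobA (e * a) ((starRingEnd ℂ) e) w
        * (1 - (starRingEnd ℂ) e * (starRingEnd ℂ) a * w)
      = (starRingEnd ℂ) e * (e * a - w) := by
    have := mobA_can (a := e * a) (e := (starRingEnd ℂ) e) (z := w) hDw
    rwa [map_mul] at this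
  have hccp : (starRingEnd ℂ) (mobA (e * a) ((starRingEnd ℂ) e) w)
      * (1 - e * a * (starRingEnd ℂ) w)
      = e * ((starRingEnd ℂ) e * (starRingEnd ℂ) a - (starRingEnd ℂ) w) := by
    have := congrArg (starRingEnd ℂ) hcp
    simpa [map_mul, map_sub, map_one, Complex.conj_conj, mul_comm, mul_left_comm, mul_assoc]
      using this
  linear_combination (-(starRingEnd ℂ) w) * hcs + z * hccp + ((starRingEnd ℂ) a * z) * he1

lemma Kker_comp {a e w z : ℂ} (ha : ‖a‖ < 1) (he : ‖e‖ = 1)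
    (hw : ‖w‖ < 1) (hz : ‖z‖ < 1) :
    Kker w (mobA a e z)
      = Kker (mobA (e * a) ((starRingEnd ℂ) e) w) z - Kker a z + Kker w (e * a) := by
  have hb : ‖e * a‖ < 1 := by rw [norm_mul, he, one_mul]; exact ha
  have hce : ‖(starRingEnd ℂ) e‖ = 1 := by rw [RCLike.norm_conj]; exact he
  have hphi : ‖mobA a e z‖ < 1 := mobA_mem ha he hz
  have hpsi : ‖mobA (e * a) ((starRingEnd ℂ) e) w‖ < 1 := mobA_mem hb hce hw
  have n1 := norm_conj_mul_lt_one hw hphi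
  have n2 := norm_conj_mul_lt_one hpsi hz
  have n3 := norm_conj_mul_lt_one ha hz
  have n4 := norm_conj_mul_lt_one hw hb
  have r1 := re_pos_of_norm_lt_one n1
  have r2 := re_pos_of_norm_lt_one n2
  have r3 := re_pos_of_norm_lt_one n3
  have r4 := re_pos_of_norm_lt_one n4
  have h := congrArg Complex.log (prod_identity ha he hw hz)
  rw [log_mul_of_re_pos r1 r3, log_mul_of_re_pos r2 r4] at h
  rw [Kker_eq n1, Kker_eq n2, Kker_eq n3, Kker_eq n4]
  linear_combination -h

/-! ### Dirichlet-space lemmas -/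

lemma dInner_conj (f g : ℂ → ℂ) : dInner f g = (starRingEnd ℂ) (dInner g f) := by
  unfold dInner
  rw [map_add, map_mul, map_mul, Complex.conj_conj, map_inv₀, Complex.conj_ofReal,
    ← integral_conj]
  congr 1
  · ring
  · congr 1
    apply integral_congr_ae
    filter_upwards with z
    simp only [map_mul, Complex.conj_conj]
    ring

lemma MemDirichlet.deriv_contOn {f : ℂ → ℂ} (hf : MemDirichlet f) :
    ContinuousOn (deriv f) unitD :=
  ((hf.1.analyticOnNhd unitD_isOpen).deriv).continuousOn

lemma MemDirichlet.deriv_aesm {f : ℂ → ℂ} (hf : MemDirichlet f) :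
    AEStronglyMeasurable (deriv f) (volume.restrict unitD) :=
  (hf.deriv_contOn).aestronglyMeasurable unitD_meas

lemma MemDirichlet.deriv_memL2 {f : ℂ → ℂ} (hf : MemDirichlet f) :
    MemLp (deriv f) 2 (volume.restrict unitD) :=
  (memLp_two_iff_integrable_sq_norm hf.deriv_aesm).2 hf.2

lemma MemDirichlet.mul_conj_integrable {f g : ℂ → ℂ} (hf : MemDirichlet f)
    (hg : MemDirichlet g) :
    IntegrableOn (fun z => deriv f z * (starRingEnd ℂ) (deriv g z)) unitD := by
  have hg2 : MemLp (fun z => (starRingEnd ℂ) (deriv g z)) 2 (volume.restrict unitD) := by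
    refine (memLp_two_iff_integrable_sq_norm ?_).2 ?_
    · exact Complex.continuous_conj.comp_aestronglyMeasurable hg.deriv_aesm
    · simpa [IntegrableOn] using hg.2
  have h12 : (1 : ℝ≥0∞) / 1 = 1 / 2 + 1 / 2 := by
    rw [ENNReal.div_add_div_same, one_add_one_eq_two, ENNReal.div_self two_ne_zero
      ENNReal.ofNat_ne_top, div_one]
  have hmem := (hf.deriv_memL2.smul hg2 :
    MemLp ((fun z => (starRingEnd ℂ) (deriv g z)) • deriv f) 1 (volume.restrict unitD))
  have hint := memLp_one_iff_integrable.1 hmem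
  rw [IntegrableOn]
  have heq : ((fun z => (starRingEnd ℂ) (deriv g z)) • deriv f)
      = fun z => deriv f z * (starRingEnd ℂ) (deriv g z) := by
    funext z; simp [mul_comm]
  rwa [heq] at hint

lemma deriv_congr_unitD {u v : ℂ → ℂ} (h : EqOn u v unitD) {z : ℂ} (hz : z ∈ unitD) :
    deriv u z = deriv v z :=
  Filter.EventuallyEq.deriv_eq (Filter.eventuallyEq_of_mem (unitD_isOpen.mem_nhds hz) h)

lemma dInner_congr_right {g u v : ℂ → ℂ} (h : EqOn u v unitD) :
    dInner g u = dInner g v := by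
  unfold dInner
  rw [h zero_mem_unitD]
  congr 1
  congr 1
  apply setIntegral_congr_fun unitD_meas
  intro z hz
  simp only []
  rw [deriv_congr_unitD h hz]

lemma dNormSq_congr {u v : ℂ → ℂ} (h : EqOn u v unitD) : dNormSq u = dNormSq v := by
  unfold dNormSq
  rw [h zero_mem_unitD]
  congr 1
  congr 1
  apply setIntegral_congr_fun unitD_meas
  intro z hz
  simp only []
  rw [deriv_congr_unitD h hz]

lemma dNormSq_nonneg (f : ℂ → ℂ) : 0 ≤ dNormSq f := by
  unfold dNormSq
  have h1 : (0:ℝ) ≤ ∫ z in unitD, ‖deriv f z‖ ^ 2 := by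
    apply integral_nonneg
    intro z; positivity
  have := Real.pi_pos
  positivity

lemma dInner_formula {g u v : ℂ → ℂ} (hg : MemDirichlet g) (hu : MemDirichlet u)
    (hv : MemDirichlet v) (c : ℂ) :
    dInner g (fun z => u z - v z + c) = dInner g u - dInner g v + g 0 * (starRingEnd ℂ) c := by
  unfold dInner
  have hder : ∀ z ∈ unitD, deriv (fun z => u z - v z + c) z = deriv u z - deriv v z := by
    intro z hz
    have hu' : DifferentiableAt ℂ u z := (hu.1.differentiableAt (unitD_isOpen.mem_nhds hz))
    have hv' : DifferentiableAt ℂ v z := (hv.1.differentiableAt (unitD_isOpen.mem_nhds hz))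
    rw [deriv_add_const]
    exact deriv_sub hu' hv'
  have hint : (∫ z in unitD, deriv g z * (starRingEnd ℂ) (deriv (fun z => u z - v z + c) z))
      = (∫ z in unitD, (deriv g z * (starRingEnd ℂ) (deriv u z)
          - deriv g z * (starRingEnd ℂ) (deriv v z))) := by
    apply setIntegral_congr_fun unitD_meas
    intro z hz
    simp only []
    rw [hder z hz]
    simp only [map_sub]
    ring
  rw [hint, integral_sub (hg.mul_conj_integrable hu) (hg.mul_conj_integrable hv)]
  simp only [map_add, map_sub]
  ring

lemma norm_add_sq_le_two (x y : ℂ) : ‖x + y‖ ^ 2 ≤ 2 * ‖x‖ ^ 2 + 2 * ‖y‖ ^ 2 := by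
  nlinarith [norm_add_le x y, sq_nonneg (‖x‖ - ‖y‖), norm_nonneg x, norm_nonneg y,
    norm_nonneg (x + y)]

lemma dNormSq_combo_le {u v : ℂ → ℂ} (hu : MemDirichlet u) (hv : MemDirichlet v)
    (p q r : ℂ) :
    dNormSq (fun z => p * u z + q * v z + r)
      ≤ ‖p * u 0 + q * v 0 + r‖ ^ 2
        + Real.pi⁻¹ * (2 * ‖p‖ ^ 2 * (∫ z in unitD, ‖deriv u z‖ ^ 2)
            + 2 * ‖q‖ ^ 2 * (∫ z in unitD, ‖deriv v z‖ ^ 2)) := by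
  unfold dNormSq
  have hder : ∀ z ∈ unitD, deriv (fun z => p * u z + q * v z + r) z
      = p * deriv u z + q * deriv v z := by
    intro z hz
    have hu' : DifferentiableAt ℂ u z := (hu.1.differentiableAt (unitD_isOpen.mem_nhds hz))
    have hv' : DifferentiableAt ℂ v z := (hv.1.differentiableAt (unitD_isOpen.mem_nhds hz))
    rw [deriv_add_const]
    rw [deriv_fun_add (hu'.const_mul p) (hv'.const_mul q), deriv_const_mul p hu',
      deriv_const_mul q hv']
  have hInt : (∫ z in unitD, ‖deriv (fun z => p * u z + q * v z + r) z‖ ^ 2)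
      ≤ ∫ z in unitD, (2 * ‖p‖ ^ 2 * ‖deriv u z‖ ^ 2 + 2 * ‖q‖ ^ 2 * ‖deriv v z‖ ^ 2) := by
    apply integral_mono_of_nonneg
    · filter_upwards with z; positivity
    · exact (hu.2.const_mul _).add (hv.2.const_mul _)
    · rw [Filter.EventuallyLE, ae_restrict_iff' unitD_meas]
      filter_upwards with z hz
      show ‖deriv (fun z => p * u z + q * v z + r) z‖ ^ 2 ≤ _
      rw [hder z hz]
      calc ‖p * deriv u z + q * deriv v z‖ ^ 2
          ≤ 2 * ‖p * deriv u z‖ ^ 2 + 2 * ‖q * deriv v z‖ ^ 2 := norm_add_sq_le_two _ _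
        _ = 2 * ‖p‖ ^ 2 * ‖deriv u z‖ ^ 2 + 2 * ‖q‖ ^ 2 * ‖deriv v z‖ ^ 2 := by
            rw [norm_mul, norm_mul]; ring
  have hsplit : (∫ z in unitD, (2 * ‖p‖ ^ 2 * ‖deriv u z‖ ^ 2 + 2 * ‖q‖ ^ 2 * ‖deriv v z‖ ^ 2))
      = 2 * ‖p‖ ^ 2 * (∫ z in unitD, ‖deriv u z‖ ^ 2)
        + 2 * ‖q‖ ^ 2 * (∫ z in unitD, ‖deriv v z‖ ^ 2) := by
    rw [integral_add (hu.2.const_mul _) (hv.2.const_mul _), integral_const_mul,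
      integral_const_mul]
  have hpi : (0:ℝ) ≤ Real.pi⁻¹ := inv_nonneg.2 Real.pi_pos.le
  have := mul_le_mul_of_nonneg_left (le_trans hInt (le_of_eq hsplit)) hpi
  simp only []
  linarith

/-! ### Change of variables: composition with a disk automorphism preserves the space -/

lemma det_complex_smul (c : ℂ) :
    ((c • (1 : ℂ →L[ℝ] ℂ)) : ℂ →L[ℝ] ℂ).det = Complex.normSq c := by
  have h : ((c • (1 : ℂ →L[ℝ] ℂ)) : ℂ →L[ℝ] ℂ).toLinearMap
      = Algebra.lmul ℝ ℂ c := by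
    ext z
    simp [smul_eq_mul]
  rw [ContinuousLinearMap.det, h]
  rw [← Algebra.norm_complex_apply]
  rfl

lemma hasFDerivWithinAt_of_diff {φ : ℂ → ℂ} {s : Set ℂ} {x : ℂ}
    (hd : DifferentiableAt ℂ φ x) :
    HasFDerivWithinAt φ ((deriv φ x) • (1 : ℂ →L[ℝ] ℂ)) s x := by
  have h1 : HasFDerivAt φ
      (((1 : ℂ →L[ℂ] ℂ).smulRight (deriv φ x)).restrictScalars ℝ) x :=
    (hd.hasDerivAt.hasFDerivAt).restrictScalars ℝ
  have h2 : ((1 : ℂ →L[ℂ] ℂ).smulRight (deriv φ x)).restrictScalars ℝ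
      = (deriv φ x) • (1 : ℂ →L[ℝ] ℂ) := by
    ext z
    simp [smul_eq_mul, mul_comm]
  rw [h2] at h1
  exact h1.hasFDerivWithinAt

lemma mobA_differentiableAt {a e x : ℂ} (ha : ‖a‖ < 1) (hx : ‖x‖ < 1) :
    DifferentiableAt ℂ (mobA a e) x := by
  have hD : (1:ℂ) - (starRingEnd ℂ) a * x ≠ 0 :=
    one_sub_ne_zero' (norm_conj_mul_lt_one ha hx)
  unfold mobA
  apply DifferentiableAt.const_mul
  exact ((differentiableAt_const a).sub differentiableAt_id).div
    (((differentiableAt_const 1).sub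
      ((differentiableAt_const ((starRingEnd ℂ) a)).mul differentiableAt_id))) hD

lemma mobA_image {a e : ℂ} (ha : ‖a‖ < 1) (he : ‖e‖ = 1) :
    mobA a e '' unitD = unitD := by
  have hb : ‖e * a‖ < 1 := by rw [norm_mul, he, one_mul]; exact ha
  have hce : ‖(starRingEnd ℂ) e‖ = 1 := by rw [RCLike.norm_conj]; exact he
  ext w
  constructor
  · rintro ⟨z, hz, rfl⟩
    exact mem_unitD.2 (mobA_mem ha he (mem_unitD.1 hz))
  · intro hw
    exact ⟨mobA (e * a) ((starRingEnd ℂ) e) w,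
      mem_unitD.2 (mobA_mem hb hce (mem_unitD.1 hw)), phi_psi ha he (mem_unitD.1 hw)⟩

lemma mobA_injOn {a e : ℂ} (ha : ‖a‖ < 1) (he : ‖e‖ = 1) :
    InjOn (mobA a e) unitD := by
  intro z1 h1 z2 h2 heq
  have e1 := psi_phi ha he (mem_unitD.1 h1)
  have e2 := psi_phi ha he (mem_unitD.1 h2)
  rw [← e1, ← e2, heq]

lemma memDirichlet_comp {a e : ℂ} (ha : ‖a‖ < 1) (he : ‖e‖ = 1)
    {f : ℂ → ℂ} (hf : MemDirichlet f) : MemDirichlet (f ∘ mobA a e) := by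
  have hmaps : MapsTo (mobA a e) unitD unitD := by
    intro z hz
    exact mem_unitD.2 (mobA_mem ha he (mem_unitD.1 hz))
  have hφdiff : ∀ x ∈ unitD, DifferentiableAt ℂ (mobA a e) x :=
    fun x hx => mobA_differentiableAt ha (mem_unitD.1 hx)
  constructor
  · exact hf.1.comp (fun x hx => ((hφdiff x hx).differentiableWithinAt)) hmaps |>.congr
      (fun x _ => rfl)
  · have hder : ∀ x ∈ unitD, HasFDerivWithinAt (mobA a e)
        ((deriv (mobA a e) x) • (1 : ℂ →L[ℝ] ℂ)) unitD x :=
      fun x hx => hasFDerivWithinAt_of_diff (hφdiff x hx)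
    have h0 : IntegrableOn (fun w => ‖deriv f w‖ ^ 2) (mobA a e '' unitD) := by
      rw [mobA_image ha he]; exact hf.2
    have h1 := (integrableOn_image_iff_integrableOn_abs_det_fderiv_smul volume unitD_meas
      hder (mobA_injOn ha he) (fun w => ‖deriv f w‖ ^ 2)).1 h0
    refine IntegrableOn.congr_fun h1 (fun x hx => ?_) unitD_meas
    have hfx : DifferentiableAt ℂ f (mobA a e x) :=
      hf.1.differentiableAt (unitD_isOpen.mem_nhds (hmaps hx))
    have hchain : deriv (f ∘ mobA a e) x = deriv f (mobA a e x) * deriv (mobA a e) x :=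
      deriv_comp x hfx (hφdiff x hx)
    simp only [det_complex_smul, smul_eq_mul]
    rw [_root_.abs_of_nonneg (Complex.normSq_nonneg _), hchain, norm_mul, mul_pow]
    rw [Complex.normSq_eq_norm_sq]
    ring

end Aux

theorem composition_operator_essentially_normal
    (a : ℂ) (ha : ‖a‖ < 1)
    (θ : ℝ) (hθ : θ ∈ Set.Ioc (-Real.pi) Real.pi)
    (φ : ℂ → ℂ)
    (hφ : φ = fun z => Complex.exp (θ * Complex.I) *
      ((a - z) / (1 - (starRingEnd ℂ) a * z)))
    (hKmem : ∀ w ∈ unitD, MemDirichlet (Kker w))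
    (hrep : ∀ f, MemDirichlet f → ∀ w ∈ unitD, dInner f (Kker w) = f w)
    (A : (ℂ → ℂ) → (ℂ → ℂ))
    (hA : ∀ g, MemDirichlet g → MemDirichlet (A g))
    (hadj : ∀ f g, MemDirichlet f → MemDirichlet g →
      dInner (f ∘ φ) g = dInner f (A g)) :
    CompactOnD (fun f => A (f ∘ φ) - (A f) ∘ φ) := by
  classical
  -- notation
  set e : ℂ := Complex.exp (θ * Complex.I) with hedef
  have he : ‖e‖ = 1 := by
    rw [hedef, Complex.norm_exp]
    simp
  have hφm : φ = mobA a e := by rw [hφ]; rfl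
  set b : ℂ := e * a with hbdef
  have hbn : ‖b‖ < 1 := by rw [hbdef, norm_mul, he, one_mul]; exact ha
  have hbm : b ∈ unitD := mem_unitD.2 hbn
  have ham : a ∈ unitD := mem_unitD.2 ha
  have h0m : (0:ℂ) ∈ unitD := zero_mem_unitD
  -- the formula for A g on the disk
  have hAform : ∀ g, MemDirichlet g → ∀ w ∈ unitD,
      A g w = g (mobA (e * a) ((starRingEnd ℂ) e) w) - g a + g 0 * Kker b w := by
    intro g hg w hw
    have hwn : ‖w‖ < 1 := mem_unitD.1 hw
    have hψw : ‖mobA (e * a) ((starRingEnd ℂ) e) w‖ < 1 := by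
      apply mobA_mem _ _ hwn
      · rw [norm_mul, he, one_mul]; exact ha
      · rw [RCLike.norm_conj]; exact he
    have hψwm : mobA (e * a) ((starRingEnd ℂ) e) w ∈ unitD := mem_unitD.2 hψw
    have step1 : A g w = dInner g (Kker w ∘ φ) := by
      have h1 : dInner (A g) (Kker w) = A g w := hrep (A g) (hA g hg) w hw
      have h2 : dInner (Kker w ∘ φ) g = dInner (Kker w) (A g) :=
        hadj (Kker w) g (hKmem w hw) hg
      rw [← h1, dInner_conj (A g) (Kker w), ← h2, ← dInner_conj]
    have heqon : EqOn (Kker w ∘ φ)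
        (fun z => Kker (mobA (e * a) ((starRingEnd ℂ) e) w) z - Kker a z + Kker w b) unitD := by
      intro z hz
      have hzn : ‖z‖ < 1 := mem_unitD.1 hz
      show Kker w (φ z) = _
      rw [hφm]
      exact Kker_comp ha he hwn hzn
    rw [step1, dInner_congr_right heqon,
      dInner_formula hg (hKmem _ hψwm) (hKmem a ham) (Kker w b),
      hrep g hg _ hψwm, hrep g hg a ham,
      conj_Kker (norm_conj_mul_lt_one hwn hbn)]
  -- the commutator is a finite rank operator on the disk
  have hcomm : ∀ g, MemDirichlet g → ∀ w ∈ unitD,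
      (A (g ∘ φ) - (A g) ∘ φ) w
        = g b * Kker b w + g 0 * Kker a w + (g a - 2 * g 0 - g 0 * Kker b b) := by
    intro g hg w hw
    have hwn : ‖w‖ < 1 := mem_unitD.1 hw
    have hφw : ‖mobA a e w‖ < 1 := mobA_mem ha he hwn
    have hφwm : mobA a e w ∈ unitD := mem_unitD.2 hφw
    have hgc : MemDirichlet (g ∘ φ) := by rw [hφm]; exact memDirichlet_comp ha he hg
    have hφ0 : mobA a e 0 = b := by
      rw [hbdef]; unfold mobA; simp
    have hφa : mobA a e a = 0 := by
      unfold mobA; simp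
    have hψb : mobA (e * a) ((starRingEnd ℂ) e) b = 0 := by
      rw [hbdef]; unfold mobA; simp
    have h1 : A (g ∘ φ) w = g w - g 0 + g b * Kker b w := by
      rw [hAform (g ∘ φ) hgc w hw]
      have e1 : (g ∘ φ) (mobA (e * a) ((starRingEnd ℂ) e) w) = g w := by
        show g (φ _) = g w
        rw [hφm, phi_psi ha he hwn]
      have e2 : (g ∘ φ) a = g 0 := by
        show g (φ a) = g 0
        rw [hφm, hφa]
      have e3 : (g ∘ φ) 0 = g b := by
        show g (φ 0) = g b
        rw [hφm, hφ0]
      rw [e1, e2, e3]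
    have h2 : (A g) (φ w) = g w - g a + g 0 * (1 - Kker a w + Kker b b) := by
      rw [hφm, hAform g hg _ hφwm, psi_phi ha he hwn]
      have e4 : Kker b (mobA a e w) = 1 - Kker a w + Kker b b := by
        rw [Kker_comp ha he hbn hwn, hψb, Kker_zero, ← hbdef]
      rw [e4]
    have : (A (g ∘ φ) - (A g) ∘ φ) w = A (g ∘ φ) w - (A g) (φ w) := rfl
    rw [this, h1, h2]
    ring
  -- now prove compactness
  intro f hfmem hfbd hweak
  simp only []
  -- the three coefficient sequences tend to zero
  have hev : ∀ x ∈ unitD, Tendsto (fun n => f n x) atTop (nhds 0) := by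
    intro x hx
    have : (fun n => f n x) = fun n => dInner (f n) (Kker x) := by
      funext n
      rw [hrep (f n) (hfmem n) x hx]
    rw [this]
    exact hweak (Kker x) (hKmem x hx)
  have hp : Tendsto (fun n => f n b) atTop (nhds 0) := hev b hbm
  have hq : Tendsto (fun n => f n 0) atTop (nhds 0) := hev 0 h0m
  have hra : Tendsto (fun n => f n a) atTop (nhds 0) := hev a ham
  have hr : Tendsto (fun n => f n a - 2 * f n 0 - f n 0 * Kker b b) atTop (nhds 0) := by
    have := (hra.sub (hq.const_mul 2)).sub (hq.mul_const (Kker b b))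
    simpa using this
  -- norm-squared of the commutator applied to f n
  set u : ℂ → ℂ := Kker b with hudef
  set v : ℂ → ℂ := Kker a with hvdef
  have hu : MemDirichlet u := hKmem b hbm
  have hv : MemDirichlet v := hKmem a ham
  set Iu : ℝ := ∫ z in unitD, ‖deriv u z‖ ^ 2 with hIu
  set Iv : ℝ := ∫ z in unitD, ‖deriv v z‖ ^ 2 with hIv
  set B : ℕ → ℝ := fun n =>
    ‖f n b * u 0 + f n 0 * v 0 + (f n a - 2 * f n 0 - f n 0 * Kker b b)‖ ^ 2
      + Real.pi⁻¹ * (2 * ‖f n b‖ ^ 2 * Iu + 2 * ‖f n 0‖ ^ 2 * Iv) with hBdef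
  have hcongr : ∀ n, dNormSq (A (f n ∘ φ) - (A (f n)) ∘ φ)
      = dNormSq (fun z => f n b * u z + f n 0 * v z
          + (f n a - 2 * f n 0 - f n 0 * Kker b b)) := by
    intro n
    apply dNormSq_congr
    intro w hw
    exact hcomm (f n) (hfmem n) w hw
  have hle : ∀ n, dNormSq (A (f n ∘ φ) - (A (f n)) ∘ φ) ≤ B n := by
    intro n
    rw [hcongr n]
    exact dNormSq_combo_le hu hv _ _ _
  have hBlim : Tendsto B atTop (nhds 0) := by
    have h1 : Tendsto (fun n => f n b * u 0 + f n 0 * v 0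
        + (f n a - 2 * f n 0 - f n 0 * Kker b b)) atTop (nhds 0) := by
      have := ((hp.mul_const (u 0)).add (hq.mul_const (v 0))).add hr
      simpa using this
    have h2 : Tendsto (fun n => ‖f n b * u 0 + f n 0 * v 0
        + (f n a - 2 * f n 0 - f n 0 * Kker b b)‖ ^ 2) atTop (nhds 0) := by
      have := (h1.norm).pow 2
      simpa using this
    have h3 : Tendsto (fun n => ‖f n b‖ ^ 2) atTop (nhds 0) := by
      have := (hp.norm).pow 2
      simpa using this
    have h4 : Tendsto (fun n => ‖f n 0‖ ^ 2) atTop (nhds 0) := by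
      have := (hq.norm).pow 2
      simpa using this
    have h5 : Tendsto (fun n => Real.pi⁻¹ * (2 * ‖f n b‖ ^ 2 * Iu + 2 * ‖f n 0‖ ^ 2 * Iv))
        atTop (nhds 0) := by
      have := (((h3.const_mul 2).mul_const Iu).add ((h4.const_mul 2).mul_const Iv)).const_mul
        Real.pi⁻¹
      simpa using this
    have := h2.add h5
    simpa using this
  have hsq : Tendsto (fun n => dNormSq (A (f n ∘ φ) - (A (f n)) ∘ φ)) atTop (nhds 0) :=
    squeeze_zero (fun n => dNormSq_nonneg _) hle hBlim
  have : Tendsto (fun n => Real.sqrt (dNormSq (A (f n ∘ φ) - (A (f n)) ∘ φ))) atTop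
      (nhds (Real.sqrt 0)) := (Real.continuous_sqrt.tendsto 0).comp hsq
  rw [Real.sqrt_zero] at this
  exact this
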